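/- arXiv:2510.18146 — 5 statements merged into one kernel-verified Lean document; each statement's English description precedes it below -/
import Mathlib

section
/- Let (c_n)_{n∈ℕ} be a sequence of real numbers with 1 ≤ c_n < c_{n+1} for all n and c_n → ∞, and suppose that for every k ∈ ℕ there exists M_k > 0 such that |c_i − c_j| ≤ M_k whenever |i − j| ≤ k. Define the linear operator D : V → V by Dξ = c_n ξ for ξ ∈ H_n (extended linearly to V). Let T be a bounded operator on H and suppose there is K ∈ ℕ such that for every n ∈ ℕ, T(H_n) is contained in the (finite) sum of the subspaces H_i over those i ∈ ℕ with |i − n| ≤ K. Then there exists a bounded operator S on H such that Sξ = D(Tξ) − T(Dξ) for every ξ ∈ V (note that Tξ ∈ V for ξ ∈ V, so this is well defined). -/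
open Submodule Filter
open scoped ComplexInnerProductSpace

/-- Pythagoras for a finite family of pairwise orthogonal vectors. -/
theorem orth_sum_sq_aux {H : Type*} [NormedAddCommGroup H] [InnerProductSpace ℂ H]
    {ι : Type*} (s : Finset ι) (f : ι → H)
    (h : ∀ i ∈ s, ∀ j ∈ s, i ≠ j → ⟪f i, f j⟫ = 0) :
    ‖∑ i ∈ s, f i‖ ^ 2 = ∑ i ∈ s, ‖f i‖ ^ 2 := by
  classical
  have key : (⟪∑ i ∈ s, f i, ∑ j ∈ s, f j⟫ : ℂ) = ∑ i ∈ s, ⟪f i, f i⟫ := by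
    rw [sum_inner]
    refine Finset.sum_congr rfl fun i hi => ?_
    rw [inner_sum]
    exact Finset.sum_eq_single_of_mem i hi fun j hj hji => h i hi j hj (Ne.symm hji)
  have h2 := inner_self_eq_norm_sq_to_K (𝕜 := ℂ) (∑ i ∈ s, f i)
  rw [key] at h2
  have h2' := h2.symm.trans
    (Finset.sum_congr rfl fun i _ => inner_self_eq_norm_sq_to_K (𝕜 := ℂ) (f i))
  exact_mod_cast h2'

/-- From `a² ≤ b²` with `a, b ≥ 0` conclude `a ≤ b`. -/
theorem le_of_sq_le_sq_aux {a b : ℝ} (ha : 0 ≤ a) (hb : 0 ≤ b) (h : a ^ 2 ≤ b ^ 2) : a ≤ b := by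
  nlinarith

/-- Let `H` be a complex Hilbert space and `(Hn n)` a family of pairwise
orthogonal finite-dimensional subspaces whose algebraic sum `V = ⨆ n, Hn n` is dense in `H`.
Let `(c n)` be a sequence of reals with `1 ≤ c n < c (n+1)`, `c n → ∞`, and such that for every
`k` there is `M > 0` with `|c i − c j| ≤ M` whenever `|i − j| ≤ k`.  Let `D` be a linear operator
acting on each `Hn n` as multiplication by `c n`, and let `T` be a bounded operator such that for
some `K`, `T (Hn n) ⊆ Σ_{|i−n| ≤ K} Hn i` for all `n`.  Then the commutator `D T − T D`, defined
on `V`, extends to a bounded operator `S` on `H`. -/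
theorem stmt0
    {H : Type*} [NormedAddCommGroup H] [InnerProductSpace ℂ H] [CompleteSpace H]
    (Hn : ℕ → Submodule ℂ H)
    (horth : ∀ m n : ℕ, m ≠ n → ∀ x ∈ Hn m, ∀ y ∈ Hn n, ⟪x, y⟫ = 0)
    (hfin : ∀ n, FiniteDimensional ℂ (Hn n))
    (hdense : Dense ((⨆ n, Hn n : Submodule ℂ H) : Set H))
    (c : ℕ → ℝ)
    (hc1 : ∀ n, 1 ≤ c n)
    (hcmono : ∀ n, c n < c (n + 1))
    (hctop : Tendsto c atTop atTop)
    (hband : ∀ k : ℕ, ∃ M : ℝ, 0 < M ∧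
      ∀ i j : ℕ, |(i : ℤ) - (j : ℤ)| ≤ (k : ℤ) → |c i - c j| ≤ M)
    (D : H →ₗ[ℂ] H)
    (hD : ∀ n : ℕ, ∀ ξ ∈ Hn n, D ξ = (c n : ℂ) • ξ)
    (T : H →L[ℂ] H) (K : ℕ)
    (hT : ∀ n : ℕ, ∀ ξ ∈ Hn n,
      T ξ ∈ (⨆ i ∈ {i : ℕ | |(i : ℤ) - (n : ℤ)| ≤ (K : ℤ)}, Hn i : Submodule ℂ H)) :
    ∃ S : H →L[ℂ] H, ∀ ξ ∈ (⨆ n, Hn n : Submodule ℂ H), S ξ = D (T ξ) - T (D ξ) := by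
  classical
  obtain ⟨M, hM0, hMb⟩ := hband K
  set Vs : Submodule ℂ H := ⨆ n, Hn n with hVs
  -- band finsets
  set B : ℕ → Finset ℕ :=
      fun n => (Finset.range (n + K + 1)).filter (fun i => |(i : ℤ) - (n : ℤ)| ≤ (K : ℤ)) with hB
  have hBmem : ∀ n i, i ∈ B n ↔ |(i : ℤ) - (n : ℤ)| ≤ (K : ℤ) := by
    intro n i
    simp only [hB, Finset.mem_filter, Finset.mem_range, abs_le]
    omega
  -- decompositions of `T x`
  have hT' : ∀ n, ∀ x ∈ Hn n, ∃ μ : ∀ i, Hn i, (∑ i ∈ B n, (μ i : H)) = T x := by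
    intro n x hx
    rw [← Submodule.mem_iSup_finset_iff_exists_sum]
    have h1 : (⨆ i ∈ B n, Hn i : Submodule ℂ H)
        = ⨆ i ∈ {i : ℕ | |(i : ℤ) - (n : ℤ)| ≤ (K : ℤ)}, Hn i := by
      refine iSup_congr fun i => ?_
      exact iSup_congr_Prop (by simpa using hBmem n i) fun _ => rfl
    rw [h1]
    exact hT n x hx
  -- the commutator formula on each `Hn n`
  have hcomm : ∀ n, ∀ x ∈ Hn n, ∀ μ : ∀ i, Hn i, (∑ i ∈ B n, (μ i : H)) = T x →
      D (T x) - T (D x) = ∑ i ∈ B n, ((c i - c n : ℝ) : ℂ) • (μ i : H) := by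
    intro n x hx μ hμ
    have h1 : D (T x) = ∑ i ∈ B n, (c i : ℂ) • (μ i : H) := by
      rw [← hμ, map_sum]
      exact Finset.sum_congr rfl fun i _ => hD i _ (μ i).2
    have h2 : T (D x) = ∑ i ∈ B n, (c n : ℂ) • (μ i : H) := by
      rw [hD n x hx, map_smul, ← hμ, Finset.smul_sum]
    rw [h1, h2, ← Finset.sum_sub_distrib]
    refine Finset.sum_congr rfl fun i _ => ?_
    rw [Complex.ofReal_sub, sub_smul]
  -- the key norm bound on `Vs`
  have key : ∀ ξ ∈ Vs, ‖D (T ξ) - T (D ξ)‖ ≤ ((2 * K + 1 : ℝ) * (M * ‖T‖)) * ‖ξ‖ := by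
    intro ξ hξ
    rw [hVs, Submodule.mem_iSup_iff_exists_finsupp] at hξ
    obtain ⟨f, hfmem, hfsum⟩ := hξ
    set s := f.support with hs
    have hξeq : ξ = ∑ n ∈ s, f n := by rw [← hfsum]; rfl
    choose μ hμeq using fun n => hT' n (f n) (hfmem n)
    -- component norms
    have hcomp : ∀ n, ∀ i ∈ B n, ‖(μ n i : H)‖ ≤ ‖T‖ * ‖f n‖ := by
      intro n i hi
      have horthμ : ∀ a ∈ B n, ∀ b ∈ B n, a ≠ b → ⟪(μ n a : H), (μ n b : H)⟫ = 0 :=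
        fun a _ b _ hab => horth a b hab _ (μ n a).2 _ (μ n b).2
      have h1 : ‖(μ n i : H)‖ ^ 2 ≤ ∑ j ∈ B n, ‖(μ n j : H)‖ ^ 2 :=
        Finset.single_le_sum (f := fun j => ‖(μ n j : H)‖ ^ 2) (fun j _ => sq_nonneg _) hi
      rw [← orth_sum_sq_aux _ _ horthμ, hμeq n] at h1
      have h2 : ‖T (f n)‖ ≤ ‖T‖ * ‖f n‖ := T.le_opNorm _
      have h3 : ‖(μ n i : H)‖ ≤ ‖T (f n)‖ :=
        le_of_sq_le_sq_aux (norm_nonneg _) (norm_nonneg _) h1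
      exact h3.trans h2
    -- the diagonal pieces
    set g : ℤ → ℕ → H := fun d n =>
      if h : 0 ≤ (n : ℤ) + d then
        ((c ((n : ℤ) + d).toNat - c n : ℝ) : ℂ) • (μ n (((n : ℤ) + d).toNat) : H)
      else 0 with hg
    have hsplit : ∀ n, (∑ i ∈ B n, ((c i - c n : ℝ) : ℂ) • (μ n i : H))
        = ∑ d ∈ Finset.Icc (-(K : ℤ)) (K : ℤ), g d n := by
      intro n
      have h0 : ∑ d ∈ (Finset.Icc (-(K : ℤ)) (K : ℤ)).filter (fun d => ¬ 0 ≤ (n : ℤ) + d),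
          g d n = 0 := by
        refine Finset.sum_eq_zero fun d hd => ?_
        simp only [hg]
        exact dif_neg (Finset.mem_filter.mp hd).2
      have h1 : ∑ d ∈ Finset.Icc (-(K : ℤ)) (K : ℤ), g d n
          = ∑ d ∈ (Finset.Icc (-(K : ℤ)) (K : ℤ)).filter (fun d => 0 ≤ (n : ℤ) + d), g d n := by
        rw [← Finset.sum_filter_add_sum_filter_not (Finset.Icc (-(K : ℤ)) (K : ℤ))
          (fun d => 0 ≤ (n : ℤ) + d) (g · n), h0, add_zero]
      rw [h1]
      refine Finset.sum_bij' (i := fun i _ => (i : ℤ) - (n : ℤ))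
        (j := fun d _ => ((n : ℤ) + d).toNat) ?_ ?_ ?_ ?_ ?_
      · intro a ha
        rw [hBmem] at ha
        simp only [Finset.mem_filter, Finset.mem_Icc]
        rw [abs_le] at ha
        omega
      · intro d hd
        simp only [Finset.mem_filter, Finset.mem_Icc] at hd
        beta_reduce
        rw [hBmem, abs_le]
        omega
      · intro a ha
        rw [hBmem, abs_le] at ha
        beta_reduce
        omega
      · intro d hd
        simp only [Finset.mem_filter, Finset.mem_Icc] at hd
        beta_reduce
        omega
      · intro a ha
        rw [hBmem, abs_le] at ha
        beta_reduce
        have hpos : 0 ≤ (n : ℤ) + ((a : ℤ) - (n : ℤ)) := by omega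
        have htn : ((n : ℤ) + ((a : ℤ) - (n : ℤ))).toNat = a := by omega
        simp only [hg]
        rw [dif_pos hpos, htn]
    -- total formula
    have htotal : D (T ξ) - T (D ξ)
        = ∑ d ∈ Finset.Icc (-(K : ℤ)) (K : ℤ), ∑ n ∈ s, g d n := by
      have h1 : D (T ξ) - T (D ξ) = ∑ n ∈ s, (D (T (f n)) - T (D (f n))) := by
        rw [hξeq, map_sum, map_sum, map_sum, map_sum, Finset.sum_sub_distrib]
      rw [h1]
      have h2 : ∀ n ∈ s, D (T (f n)) - T (D (f n))
          = ∑ d ∈ Finset.Icc (-(K : ℤ)) (K : ℤ), g d n := by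
        intro n _
        rw [hcomm n (f n) (hfmem n) (μ n) (hμeq n), hsplit n]
      rw [Finset.sum_congr rfl h2, Finset.sum_comm]
    -- norm of `ξ`
    have hξsq : ∑ n ∈ s, ‖f n‖ ^ 2 = ‖ξ‖ ^ 2 := by
      rw [hξeq]
      exact (orth_sum_sq_aux _ _ fun a _ b _ hab =>
        horth a b hab _ (hfmem a) _ (hfmem b)).symm
    -- bound for each diagonal
    have hdiag : ∀ d ∈ Finset.Icc (-(K : ℤ)) (K : ℤ), ‖∑ n ∈ s, g d n‖ ≤ M * ‖T‖ * ‖ξ‖ := by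
      intro d hd
      rw [Finset.mem_Icc] at hd
      have horthg : ∀ a ∈ s, ∀ b ∈ s, a ≠ b → ⟪g d a, g d b⟫ = 0 := by
        intro a _ b _ hab
        by_cases ha : 0 ≤ (a : ℤ) + d
        · by_cases hb : 0 ≤ (b : ℤ) + d
          · have hne : ((a : ℤ) + d).toNat ≠ ((b : ℤ) + d).toNat := by omega
            simp only [hg]
            rw [dif_pos ha, dif_pos hb, inner_smul_left, inner_smul_right,
              horth _ _ hne _ (μ a _).2 _ (μ b _).2, mul_zero, mul_zero]
          · simp only [hg]
            rw [dif_neg hb, inner_zero_right]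
        · simp only [hg]
          rw [dif_neg ha, inner_zero_left]
      have hterm : ∀ n ∈ s, ‖g d n‖ ≤ M * (‖T‖ * ‖f n‖) := by
        intro n _
        by_cases hpos : 0 ≤ (n : ℤ) + d
        · have hiB : ((n : ℤ) + d).toNat ∈ B n := by
            rw [hBmem, abs_le]
            omega
          have hcK : |c (((n : ℤ) + d).toNat) - c n| ≤ M := by
            refine hMb _ n ?_
            rw [abs_le]
            omega
          simp only [hg]
          rw [dif_pos hpos, norm_smul, Complex.norm_real, Real.norm_eq_abs]
          exact mul_le_mul hcK (hcomp n _ hiB) (norm_nonneg _) (le_of_lt hM0)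
        · simp only [hg]
          rw [dif_neg hpos, norm_zero]
          positivity
      have hsq : ‖∑ n ∈ s, g d n‖ ^ 2 = ∑ n ∈ s, ‖g d n‖ ^ 2 := orth_sum_sq_aux _ _ horthg
      have hsum2 : ∑ n ∈ s, ‖g d n‖ ^ 2 ≤ ∑ n ∈ s, (M * ‖T‖) ^ 2 * ‖f n‖ ^ 2 := by
        refine Finset.sum_le_sum fun n hn => ?_
        have := hterm n hn
        nlinarith [norm_nonneg (g d n), norm_nonneg (f n : H), hM0, norm_nonneg T]
      have hfin2 : ‖∑ n ∈ s, g d n‖ ^ 2 ≤ (M * ‖T‖ * ‖ξ‖) ^ 2 := by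
        rw [hsq]
        calc ∑ n ∈ s, ‖g d n‖ ^ 2 ≤ ∑ n ∈ s, (M * ‖T‖) ^ 2 * ‖f n‖ ^ 2 := hsum2
          _ = (M * ‖T‖) ^ 2 * ∑ n ∈ s, ‖f n‖ ^ 2 := by rw [Finset.mul_sum]
          _ = (M * ‖T‖ * ‖ξ‖) ^ 2 := by rw [hξsq]; ring
      refine le_of_sq_le_sq_aux (norm_nonneg _) ?_ hfin2
      positivity
    -- put everything together
    rw [htotal]
    calc ‖∑ d ∈ Finset.Icc (-(K : ℤ)) (K : ℤ), ∑ n ∈ s, g d n‖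
        ≤ ∑ d ∈ Finset.Icc (-(K : ℤ)) (K : ℤ), ‖∑ n ∈ s, g d n‖ := norm_sum_le _ _
      _ ≤ ∑ _d ∈ Finset.Icc (-(K : ℤ)) (K : ℤ), M * ‖T‖ * ‖ξ‖ := Finset.sum_le_sum hdiag
      _ = ((Finset.Icc (-(K : ℤ)) (K : ℤ)).card : ℝ) * (M * ‖T‖ * ‖ξ‖) := by
          rw [Finset.sum_const, nsmul_eq_mul]
      _ = ((2 * K + 1 : ℝ) * (M * ‖T‖)) * ‖ξ‖ := by
          rw [Int.card_Icc]
          have : ((K : ℤ) + 1 - -(K : ℤ)).toNat = 2 * K + 1 := by omega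
          rw [this]
          push_cast
          ring
  -- construct the extension
  let e : Vs →L[ℂ] H := Vs.subtypeL
  have hde : DenseRange e := hdense.denseRange_val
  have hue : IsUniformInducing e := isUniformEmbedding_subtype_val.isUniformInducing
  let f0 : Vs →ₗ[ℂ] H :=
    (D ∘ₗ (T : H →ₗ[ℂ] H) - (T : H →ₗ[ℂ] H) ∘ₗ D) ∘ₗ Vs.subtype
  have hf0 : ∀ x : Vs, f0 x = D (T (x : H)) - T (D (x : H)) := fun x => rfl
  let fC : Vs →L[ℂ] H := f0.mkContinuous ((2 * K + 1 : ℝ) * (M * ‖T‖)) (fun x => by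
    rw [hf0]
    exact key (x : H) x.2)
  refine ⟨fC.extend e, ?_⟩
  intro ξ hξ
  have h := ContinuousLinearMap.extend_eq fC hde hue ⟨ξ, hξ⟩
  have he : e ⟨ξ, hξ⟩ = ξ := rfl
  rw [he] at h
  rw [h]
  rfl
end

section
/- Let m ≥ 1 and n₁, n₂ ≥ 0. If μ ∈ Φ_{n₁}^m and ν ∈ Φ_{n₂}^m and μ ⩓ ν, then either μ extends ν or ν extends μ. -/
/-! Combinatorial model of the Mitscher–Spielberg category of paths `Λ`. -/

/-- The letters (edges) of the category of paths: `A = α`, `B = β`, and the `Λ₂`-edges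
`G j = γ^{(j)}`. -/
inductive Letter : Type
  | A : Letter
  | B : Letter
  | G : ℕ → Letter
  deriving DecidableEq

/-- A letter lies in `{α, β}` (i.e. is a `Λ₁`-edge). -/
def Letter.isAB : Letter → Prop
  | .A => True
  | .B => True
  | .G _ => False

/-- `w` is a path from the vertex `v_m`: the `t`-th entry (1-indexed), if equal to `G j`,
must satisfy `1 ≤ j ≤ k (m + t − 1)`. -/
def IsPath (k : ℕ → ℕ) (m : ℕ) (w : List Letter) : Prop :=
  ∀ t : Fin w.length, ∀ j : ℕ, w.get t = Letter.G j → 1 ≤ j ∧ j ≤ k (m + (t : ℕ))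

/-- One elementary move: transpose two adjacent entries which both lie in `{α, β}`. -/
def Swap (w₁ w₂ : List Letter) : Prop :=
  ∃ (u v : List Letter) (a b : Letter), a.isAB ∧ b.isAB ∧
    w₁ = u ++ a :: b :: v ∧ w₂ = u ++ b :: a :: v

/-- The equivalence relation `≈` generated by the elementary moves; classes of paths from `v_m`
are the elements of `Λ(m)`. -/
def PEqv : List Letter → List Letter → Prop := Relation.EqvGen Swap

/-- The class of `μ` extends the class of `ν` (i.e. `μ = ν·ξ` for some class `ξ`). -/
def PExtends (μ ν : List Letter) : Prop := ∃ ξ : List Letter, PEqv μ (ν ++ ξ)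

/-- The class of `μ` extends the class of `ν` nontrivially. -/
def PExtendsNontrivially (μ ν : List Letter) : Prop :=
  ∃ ξ : List Letter, ξ ≠ [] ∧ PEqv μ (ν ++ ξ)

/-- `μ ⩓ ν`: the classes of `μ` and `ν` admit a common extension in `Λ(m)`. -/
def Meets (k : ℕ → ℕ) (m : ℕ) (μ ν : List Letter) : Prop :=
  ∃ l : List Letter, IsPath k m l ∧ PExtends l μ ∧ PExtends l ν

/-- The class of `w` belongs to `Φ_n^m ⊆ Λ(m)`: either `w` is empty, or `1 ≤ |w| ≤ n` and the
last letter of `w` is of the form `G j`. -/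
def InPhi (n : ℕ) (w : List Letter) : Prop :=
  w = [] ∨ (1 ≤ w.length ∧ w.length ≤ n ∧ ∃ j : ℕ, w.getLast? = some (Letter.G j))

/- Auxiliary lemmas -/

lemma swap_symm {w₁ w₂ : List Letter} (h : Swap w₁ w₂) : Swap w₂ w₁ := by
  obtain ⟨u, v, a, b, ha, hb, h1, h2⟩ := h
  exact ⟨u, v, b, a, hb, ha, h2, h1⟩

lemma swap_getG {w₁ w₂ : List Letter} (h : Swap w₁ w₂) (p j : ℕ)
    (hg : w₁[p]? = some (Letter.G j)) : w₂[p]? = some (Letter.G j) := by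
  obtain ⟨u, v, a, b, ha, hb, h1, h2⟩ := h
  subst h1 h2
  rcases lt_or_ge p u.length with hp | hp
  · rwa [List.getElem?_append_left hp] at hg ⊢
  · rw [List.getElem?_append_right hp] at hg ⊢
    rcases Nat.lt_or_ge (p - u.length) 2 with h2 | h2
    · interval_cases h : (p - u.length) <;> simp_all
      · exact ha.elim
      · exact hb.elim
    · obtain ⟨q, hq⟩ : ∃ q, p - u.length = q + 2 := ⟨p - u.length - 2, by omega⟩
      rw [hq] at hg ⊢
      simpa using hg

lemma peqv_getG {w₁ w₂ : List Letter} (h : PEqv w₁ w₂) (p j : ℕ) :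
    w₁[p]? = some (Letter.G j) ↔ w₂[p]? = some (Letter.G j) := by
  induction h with
  | rel x y hxy => exact ⟨swap_getG hxy p j, swap_getG (swap_symm hxy) p j⟩
  | refl => exact Iff.rfl
  | symm x y hxy ih => exact ih.symm
  | trans x y z _ _ ih₁ ih₂ => exact ih₁.trans ih₂

lemma swap_split {w₁ w₂ : List Letter} (h : Swap w₁ w₂) (p j : ℕ) (hp : 1 ≤ p)
    (hg : w₁[p - 1]? = some (Letter.G j)) :
    (w₁.take p = w₂.take p ∨ Swap (w₁.take p) (w₂.take p)) ∧
    (w₁.drop p = w₂.drop p ∨ Swap (w₁.drop p) (w₂.drop p)) := by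
  obtain ⟨u, v, a, b, ha, hb, h1, h2⟩ := h
  have hne1 : p - 1 ≠ u.length := by
    intro he
    rw [h1, List.getElem?_append_right he.ge, he] at hg
    simp at hg
    rw [hg] at ha; exact ha.elim
  have hne2 : p - 1 ≠ u.length + 1 := by
    intro he
    rw [h1, List.getElem?_append_right (by omega : u.length ≤ p - 1)] at hg
    have : p - 1 - u.length = 1 := by omega
    rw [this] at hg
    simp at hg
    rw [hg] at hb; exact hb.elim
  have hlen : p - 1 < w₁.length := by
    by_contra hc
    rw [List.getElem?_eq_none (by omega)] at hg
    cases hg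
  rcases Nat.lt_or_ge (p - 1) u.length with hc | hc
  · -- p ≤ u.length : swap lies entirely in the dropped part
    have hpu : p ≤ u.length := by omega
    constructor
    · left
      rw [h1, h2, List.take_append_of_le_length hpu, List.take_append_of_le_length hpu]
    · right
      rw [h1, h2, List.drop_append_of_le_length hpu, List.drop_append_of_le_length hpu]
      exact ⟨u.drop p, v, a, b, ha, hb, rfl, rfl⟩
  · -- p ≥ u.length + 3 : swap lies entirely in the taken part
    have hpu : u.length + 3 ≤ p := by omega
    have ht1 : w₁.take p = u ++ a :: b :: v.take (p - u.length - 2) := by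
      rw [h1, List.take_append, List.take_of_length_le (by omega)]
      congr 1
      have : p - u.length = (p - u.length - 2) + 2 := by omega
      rw [this]
      simp
    have ht2 : w₂.take p = u ++ b :: a :: v.take (p - u.length - 2) := by
      rw [h2, List.take_append, List.take_of_length_le (by omega)]
      congr 1
      have : p - u.length = (p - u.length - 2) + 2 := by omega
      rw [this]
      simp
    have hd1 : w₁.drop p = v.drop (p - u.length - 2) := by
      rw [h1, List.drop_append, List.drop_of_length_le (by omega)]
      have : p - u.length = (p - u.length - 2) + 2 := by omega
      rw [this]
      simp
    have hd2 : w₂.drop p = v.drop (p - u.length - 2) := by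
      rw [h2, List.drop_append, List.drop_of_length_le (by omega)]
      have : p - u.length = (p - u.length - 2) + 2 := by omega
      rw [this]
      simp
    exact ⟨Or.inr ⟨u, v.take (p - u.length - 2), a, b, ha, hb, ht1, ht2⟩,
      Or.inl (hd1.trans hd2.symm)⟩

lemma peqv_refl (w : List Letter) : PEqv w w := Relation.EqvGen.refl w

lemma peqv_split (p j : ℕ) (hp : 1 ≤ p) {w₁ w₂ : List Letter} (h : PEqv w₁ w₂) :
    w₁[p - 1]? = some (Letter.G j) →
    PEqv (w₁.take p) (w₂.take p) ∧ PEqv (w₁.drop p) (w₂.drop p) := by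
  induction h with
  | rel x y hxy =>
    intro hg
    obtain ⟨h1, h2⟩ := swap_split hxy p j hp hg
    constructor
    · rcases h1 with h1 | h1
      · rw [h1]; exact peqv_refl _
      · exact Relation.EqvGen.rel _ _ h1
    · rcases h2 with h2 | h2
      · rw [h2]; exact peqv_refl _
      · exact Relation.EqvGen.rel _ _ h2
  | refl => exact fun _ => ⟨peqv_refl _, peqv_refl _⟩
  | symm x y hxy ih =>
    intro hg
    obtain ⟨h1, h2⟩ := ih ((peqv_getG hxy (p - 1) j).mpr hg)
    exact ⟨Relation.EqvGen.symm _ _ h1, Relation.EqvGen.symm _ _ h2⟩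
  | trans x y z hxy hyz ih₁ ih₂ =>
    intro hg
    obtain ⟨h1, h2⟩ := ih₁ hg
    obtain ⟨h3, h4⟩ := ih₂ ((peqv_getG hxy (p - 1) j).mp hg)
    exact ⟨Relation.EqvGen.trans _ _ _ h1 h3, Relation.EqvGen.trans _ _ _ h2 h4⟩

lemma peqv_append_right {w₁ w₂ : List Letter} (h : PEqv w₁ w₂) (c : List Letter) :
    PEqv (w₁ ++ c) (w₂ ++ c) := by
  induction h with
  | rel x y hxy =>
    obtain ⟨u, v, a, b, ha, hb, h1, h2⟩ := hxy
    exact Relation.EqvGen.rel _ _ ⟨u, v ++ c, a, b, ha, hb, by simp [h1], by simp [h2]⟩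
  | refl => exact peqv_refl _
  | symm x y _ ih => exact Relation.EqvGen.symm _ _ ih
  | trans x y z _ _ ih₁ ih₂ => exact Relation.EqvGen.trans _ _ _ ih₁ ih₂

/-- The one-sided key lemma: if `μ` is nonempty, ends in a `G`-letter, is at most as long as `ν`,
and `μ ++ ξ₁ ≈ ν ++ ξ₂`, then `ν` extends `μ`. -/
lemma key_lemma {μ ν ξ₁ ξ₂ : List Letter} (hμne : 1 ≤ μ.length) (hlen : μ.length ≤ ν.length)
    (j : ℕ) (hG : μ.getLast? = some (Letter.G j))
    (h : PEqv (μ ++ ξ₁) (ν ++ ξ₂)) : PExtends ν μ := by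
  set p := μ.length with hp
  have hg : (μ ++ ξ₁)[p - 1]? = some (Letter.G j) := by
    rw [List.getElem?_append_left (by omega)]
    rw [List.getLast?_eq_getElem?] at hG
    exact hG
  obtain ⟨htake, _⟩ := peqv_split p j hμne h hg
  rw [List.take_left] at htake
  rw [List.take_append_of_le_length hlen] at htake
  refine ⟨ν.drop p, ?_⟩
  have h1 : PEqv (ν.take p ++ ν.drop p) (μ ++ ν.drop p) :=
    peqv_append_right (Relation.EqvGen.symm _ _ htake) _
  rwa [List.take_append_drop] at h1

/-- Proposition: `Φ`-classes that meet are comparable.  Let `m ≥ 1` and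
`n₁, n₂ ≥ 0`.  If `μ ∈ Φ_{n₁}^m`, `ν ∈ Φ_{n₂}^m` and `μ ⩓ ν`, then one of `μ, ν` extends the
other. -/
theorem stmt3 (k : ℕ → ℕ) (hk0 : k 0 = 0) (m n₁ n₂ : ℕ) (hm : 1 ≤ m)
    (μ ν : List Letter) (hμ : IsPath k m μ) (hν : IsPath k m ν)
    (hμΦ : InPhi n₁ μ) (hνΦ : InPhi n₂ ν) (hmeet : Meets k m μ ν) :
    PExtends μ ν ∨ PExtends ν μ := by
  rcases hμΦ with rfl | ⟨hμ1, _, jμ, hμG⟩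
  · exact Or.inr ⟨ν, peqv_refl ν⟩
  rcases hνΦ with rfl | ⟨hν1, _, jν, hνG⟩
  · exact Or.inl ⟨μ, peqv_refl μ⟩
  obtain ⟨l, _, ⟨ξ₁, hl₁⟩, ⟨ξ₂, hl₂⟩⟩ := hmeet
  have hcomb : PEqv (μ ++ ξ₁) (ν ++ ξ₂) :=
    Relation.EqvGen.trans _ _ _ (Relation.EqvGen.symm _ _ hl₁) hl₂
  rcases le_total μ.length ν.length with hle | hle
  · exact Or.inr (key_lemma hμ1 hle jμ hμG hcomb)
  · exact Or.inl (key_lemma hν1 hle jν hνG (Relation.EqvGen.symm _ _ hcomb))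
end

section
/- Let j ≥ 1, ℓ ≥ 0, m = p_j + ℓ + 1, j' ≥ j and ℓ' ≥ m. Suppose (μ, ν) ∈ S_j and (μ', ν') ∈ S_{j'}. Let δ = μ·α^r and ε = ν·β^s, where r = p_j + ℓ − |μ| and s = p_j + ℓ − |ν| (so |δ| = |ε| = p_j + ℓ), and let (δ', ε') = (μ'·c^{r'}, ν'·d^{s'}) ∈ S_{j',ℓ'}, where {c, d} = {α, β}. If ε ⩓ δ', then either μ' = ν, or μ' is a nontrivial extension of ε. -/
/-- A `Λ₁`-word: all letters lie in `{α, β}`. -/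
def IsLambda1 (w : List Letter) : Prop := ∀ a ∈ w, a.isAB

/-- The degrees `d(η) = (#α's, #β's)` and `d(θ)` are orthogonal in `ℕ²`. -/
def DegPerp (η θ : List Letter) : Prop :=
  η.count Letter.A * θ.count Letter.A + η.count Letter.B * θ.count Letter.B = 0

/-- `p : ℕ → ℕ` enumerates `{i ≥ 1 : k i ≠ 0}` in increasing order, with `p 0 = 0`. -/
def Enumerates (k p : ℕ → ℕ) : Prop :=
  p 0 = 0 ∧ StrictMono p ∧ (∀ j, 1 ≤ j → 1 ≤ p j ∧ k (p j) ≠ 0) ∧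
    ∀ i, 1 ≤ i → k i ≠ 0 → ∃ j, p j = i

/-- `(μ, ν) ∈ S_j`: both classes lie in `Φ_{p_j} = Φ_{p_j}^1 ⊆ Λ(1)` and at least one of them
has length `p_j`. -/
def InS (k p : ℕ → ℕ) (j : ℕ) (μ ν : List Letter) : Prop :=
  IsPath k 1 μ ∧ IsPath k 1 ν ∧ InPhi (p j) μ ∧ InPhi (p j) ν ∧
    (μ.length = p j ∨ ν.length = p j)

/-- `(δ, ε) ∈ S_{j,ℓ}`: `δ = μ·η` and `ε = ν·θ` with `(μ, ν) ∈ S_j`, `η, θ` `Λ₁`-words,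
`|δ| = |ε| = p_j + ℓ`, and `d(η) ⊥ d(θ)`. -/
def InSJL (k p : ℕ → ℕ) (j ℓ : ℕ) (δ ε : List Letter) : Prop :=
  ∃ μ ν η θ : List Letter, InS k p j μ ν ∧ IsLambda1 η ∧ IsLambda1 θ ∧
    PEqv δ (μ ++ η) ∧ PEqv ε (ν ++ θ) ∧
    δ.length = p j + ℓ ∧ ε.length = p j + ℓ ∧ DegPerp η θ

/-! ## Normal form -/

def normAux : ℕ → ℕ → List Letter → List Letter
  | na, nb, [] => List.replicate na .A ++ List.replicate nb .B
  | na, nb, .A :: t => normAux (na+1) nb t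
  | na, nb, .B :: t => normAux na (nb+1) t
  | na, nb, .G j :: t => List.replicate na .A ++ List.replicate nb .B ++ .G j :: normAux 0 0 t

def nf (w : List Letter) : List Letter := normAux 0 0 w

lemma normAux_swap (a b : Letter) (ha : a.isAB) (hb : b.isAB) (u v : List Letter) :
    ∀ na nb, normAux na nb (u ++ a :: b :: v) = normAux na nb (u ++ b :: a :: v) := by
  induction u with
  | nil => intro na nb; cases a <;> cases b <;> simp_all [normAux, Letter.isAB]
  | cons x t ih => intro na nb; cases x <;> simp [normAux, ih]

lemma Swap.nf_eq {w₁ w₂ : List Letter} (h : Swap w₁ w₂) : nf w₁ = nf w₂ := by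
  obtain ⟨u, v, a, b, ha, hb, h1, h2⟩ := h
  subst h1; subst h2; exact normAux_swap a b ha hb u v 0 0

lemma PEqv.nf_eq {w₁ w₂ : List Letter} (h : PEqv w₁ w₂) : nf w₁ = nf w₂ := by
  induction h with
  | rel _ _ h => exact h.nf_eq
  | refl => rfl
  | symm _ _ _ ih => exact ih.symm
  | trans _ _ _ _ _ ih₁ ih₂ => exact ih₁.trans ih₂

lemma Swap.append_left {x y : List Letter} (u : List Letter) (h : Swap x y) :
    Swap (u ++ x) (u ++ y) := by
  obtain ⟨u₀, v₀, a, b, ha, hb, h1, h2⟩ := h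
  exact ⟨u ++ u₀, v₀, a, b, ha, hb, by simp [h1], by simp [h2]⟩

lemma Swap.append_right {x y : List Letter} (v : List Letter) (h : Swap x y) :
    Swap (x ++ v) (y ++ v) := by
  obtain ⟨u₀, v₀, a, b, ha, hb, h1, h2⟩ := h
  exact ⟨u₀, v₀ ++ v, a, b, ha, hb, by simp [h1], by simp [h2]⟩

lemma PEqv.append_left {x y : List Letter} (u : List Letter) (h : PEqv x y) :
    PEqv (u ++ x) (u ++ y) := by
  induction h with
  | rel _ _ h => exact Relation.EqvGen.rel _ _ (h.append_left u)
  | refl => exact Relation.EqvGen.refl _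
  | symm _ _ _ ih => exact Relation.EqvGen.symm _ _ ih
  | trans _ _ _ _ _ ih₁ ih₂ => exact Relation.EqvGen.trans _ _ _ ih₁ ih₂

lemma PEqv.append_right {x y : List Letter} (v : List Letter) (h : PEqv x y) :
    PEqv (x ++ v) (y ++ v) := by
  induction h with
  | rel _ _ h => exact Relation.EqvGen.rel _ _ (h.append_right v)
  | refl => exact Relation.EqvGen.refl _
  | symm _ _ _ ih => exact Relation.EqvGen.symm _ _ ih
  | trans _ _ _ _ _ ih₁ ih₂ => exact Relation.EqvGen.trans _ _ _ ih₁ ih₂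

lemma peqv_pullA (n : ℕ) (t : List Letter) :
    PEqv (List.replicate n Letter.B ++ Letter.A :: t)
      (Letter.A :: (List.replicate n Letter.B ++ t)) := by
  induction n with
  | zero => exact Relation.EqvGen.refl _
  | succ n ih =>
      have h1 : PEqv (List.replicate (n+1) Letter.B ++ Letter.A :: t)
          (Letter.B :: Letter.A :: (List.replicate n Letter.B ++ t)) := by
        rw [List.replicate_succ, List.cons_append]
        exact ih.append_left [Letter.B]
      have h2 : Swap (Letter.B :: Letter.A :: (List.replicate n Letter.B ++ t))
          (Letter.A :: Letter.B :: (List.replicate n Letter.B ++ t)) :=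
        ⟨[], List.replicate n Letter.B ++ t, Letter.B, Letter.A, trivial, trivial, rfl, rfl⟩
      have := Relation.EqvGen.trans _ _ _ h1 (Relation.EqvGen.rel _ _ h2)
      simpa [List.replicate_succ, PEqv] using this

lemma peqv_normAux (w : List Letter) : ∀ na nb,
    PEqv (List.replicate na Letter.A ++ List.replicate nb Letter.B ++ w) (normAux na nb w) := by
  induction w with
  | nil => intro na nb; simp [normAux]; exact Relation.EqvGen.refl _
  | cons x t ih =>
      intro na nb
      cases x with
      | A =>
          have h1 : PEqv (List.replicate na Letter.A ++ List.replicate nb Letter.B ++ Letter.A :: t)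
              (List.replicate (na+1) Letter.A ++ List.replicate nb Letter.B ++ t) := by
            have h0 := (peqv_pullA nb t).append_left (List.replicate na Letter.A)
            have e : List.replicate na Letter.A ++ (Letter.A :: (List.replicate nb Letter.B ++ t))
                = List.replicate (na+1) Letter.A ++ List.replicate nb Letter.B ++ t := by
              simp [List.replicate_succ' (n := na), List.append_assoc]
            rw [List.append_assoc, ← e]
            exact h0
          exact Relation.EqvGen.trans _ _ _ h1 (by simpa [normAux, PEqv] using ih (na+1) nb)
      | B =>
          have h1 : List.replicate na Letter.A ++ List.replicate nb Letter.B ++ Letter.B :: t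
              = List.replicate na Letter.A ++ List.replicate (nb+1) Letter.B ++ t := by
            simp [List.replicate_succ' (n := nb), List.append_assoc]
          rw [h1]
          simpa [normAux] using ih na (nb+1)
      | G i =>
          have h1 := (ih 0 0).append_left
            (List.replicate na Letter.A ++ List.replicate nb Letter.B ++ [Letter.G i])
          simpa [normAux, List.append_assoc] using h1

lemma peqv_nf (w : List Letter) : PEqv w (nf w) := by
  simpa [nf] using peqv_normAux w 0 0

lemma peqv_iff_nf {w₁ w₂ : List Letter} : PEqv w₁ w₂ ↔ nf w₁ = nf w₂ := by
  constructor
  · exact PEqv.nf_eq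
  · intro h
    exact Relation.EqvGen.trans _ _ _ (peqv_nf w₁)
      (Relation.EqvGen.trans _ _ _ (h ▸ Relation.EqvGen.refl _)
        (Relation.EqvGen.symm _ _ (peqv_nf w₂)))

/-! ## Structural lemmas about the normal form -/

lemma normAux_length : ∀ (w : List Letter) (na nb : ℕ),
    (normAux na nb w).length = na + nb + w.length := by
  intro w
  induction w with
  | nil => intro na nb; simp [normAux]
  | cons x t ih => intro na nb; cases x <;> simp [normAux, ih] <;> omega

lemma nf_length (w : List Letter) : (nf w).length = w.length := by
  simpa [nf] using normAux_length w 0 0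

lemma normAux_getG : ∀ (w : List Letter) (na nb t i : ℕ),
    (normAux na nb w)[t]? = some (Letter.G i) ↔
      na + nb ≤ t ∧ w[t - (na + nb)]? = some (Letter.G i) := by
  intro w
  induction w with
  | nil =>
      intro na nb t i
      constructor
      · intro h
        have hm := List.mem_of_getElem? h
        rw [show normAux na nb [] = List.replicate na Letter.A ++ List.replicate nb Letter.B
          from rfl] at hm
        rcases List.mem_append.1 hm with hm | hm <;>
          exact absurd (List.eq_of_mem_replicate hm) (by simp)
      · intro ⟨_, h⟩; simp at h
  | cons x tl ih =>
      intro na nb t i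
      cases x with
      | A =>
          rw [show normAux na nb (Letter.A :: tl) = normAux (na+1) nb tl from rfl, ih]
          constructor
          · rintro ⟨h1, h2⟩
            refine ⟨by omega, ?_⟩
            have : t - (na + nb) = (t - (na + 1 + nb)) + 1 := by omega
            rw [this, List.getElem?_cons_succ]; exact h2
          · rintro ⟨h1, h2⟩
            rcases Nat.eq_or_lt_of_le h1 with h | h
            · rw [← h] at h2; simp at h2
            · refine ⟨by omega, ?_⟩
              have : t - (na + nb) = (t - (na + 1 + nb)) + 1 := by omega
              rw [this, List.getElem?_cons_succ] at h2; exact h2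
      | B =>
          rw [show normAux na nb (Letter.B :: tl) = normAux na (nb+1) tl from rfl, ih]
          constructor
          · rintro ⟨h1, h2⟩
            refine ⟨by omega, ?_⟩
            have : t - (na + nb) = (t - (na + (nb + 1))) + 1 := by omega
            rw [this, List.getElem?_cons_succ]; exact h2
          · rintro ⟨h1, h2⟩
            rcases Nat.eq_or_lt_of_le h1 with h | h
            · rw [← h] at h2; simp at h2
            · refine ⟨by omega, ?_⟩
              have : t - (na + nb) = (t - (na + (nb + 1))) + 1 := by omega
              rw [this, List.getElem?_cons_succ] at h2; exact h2
      | G j =>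
          rw [show normAux na nb (Letter.G j :: tl)
            = List.replicate na Letter.A ++ (List.replicate nb Letter.B
              ++ Letter.G j :: normAux 0 0 tl) from by simp [normAux]]
          rw [List.getElem?_append, List.getElem?_append]
          simp only [List.length_replicate]
          rcases Nat.lt_or_ge t na with h | h
          · simp only [if_pos h]
            constructor
            · intro hc
              have := List.mem_of_getElem? hc
              simp [List.eq_of_mem_replicate this] at this ⊢
              exact absurd (List.eq_of_mem_replicate (List.mem_of_getElem? hc)) (by simp)
            · rintro ⟨h1, _⟩; omega
          · rw [if_neg (by omega)]
            rcases Nat.lt_or_ge (t - na) nb with h2 | h2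
            · rw [if_pos h2]
              constructor
              · intro hc
                exact absurd (List.eq_of_mem_replicate (List.mem_of_getElem? hc)) (by simp)
              · rintro ⟨h1, _⟩; omega
            · rw [if_neg (by omega)]
              rcases Nat.eq_or_lt_of_le h2 with h3 | h3
              · rw [show t - na - nb = 0 from by omega, List.getElem?_cons_zero,
                  show t - (na + nb) = 0 from by omega]
                simp
                omega
              · rw [show t - na - nb = (t - na - nb - 1) + 1 from by omega,
                  List.getElem?_cons_succ, ih,
                  show t - (na + nb) = (t - na - nb - 1) + 1 from by omega,
                  List.getElem?_cons_succ]
                simp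
                omega

lemma nf_getG (w : List Letter) (t i : ℕ) :
    (nf w)[t]? = some (Letter.G i) ↔ w[t]? = some (Letter.G i) := by
  rw [nf, normAux_getG]; simp

lemma nfEq_getG {v w : List Letter} (h : nf v = nf w) (t i : ℕ) :
    v[t]? = some (Letter.G i) ↔ w[t]? = some (Letter.G i) := by
  rw [← nf_getG, h, nf_getG]

lemma normAux_ABprefix : ∀ (u : List Letter), (∀ a ∈ u, a.isAB) → ∀ na nb (z : List Letter),
    normAux na nb (u ++ z)
      = normAux (na + u.count Letter.A) (nb + u.count Letter.B) z := by
  intro u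
  induction u with
  | nil => intro _ na nb z; simp
  | cons x t ih =>
      intro hu na nb z
      have hx : x.isAB := hu x (by simp)
      have ht : ∀ a ∈ t, a.isAB := fun a ha => hu a (by simp [ha])
      cases x with
      | A =>
          rw [List.cons_append, show normAux na nb (Letter.A :: (t ++ z))
            = normAux (na+1) nb (t ++ z) from rfl, ih ht]
          congr 1 <;> simp [List.count_cons] <;> omega
      | B =>
          rw [List.cons_append, show normAux na nb (Letter.B :: (t ++ z))
            = normAux na (nb+1) (t ++ z) from rfl, ih ht]
          congr 1 <;> simp [List.count_cons] <;> omega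
      | G j => exact absurd hx (by simp [Letter.isAB])

lemma normAux_split : ∀ (u : List Letter) (na nb i : ℕ) (t : List Letter),
    normAux na nb (u ++ Letter.G i :: t)
      = normAux na nb (u ++ [Letter.G i]) ++ normAux 0 0 t := by
  intro u
  induction u with
  | nil => intro na nb i t; simp [normAux]
  | cons x s ih =>
      intro na nb i t
      cases x <;> simp only [List.cons_append] <;>
        simp only [normAux] <;> rw [ih] <;> simp [List.append_assoc]

lemma nf_split_at_G {w : List Letter} {u : List Letter} {i : ℕ}
    (hw : w = u ++ [Letter.G i]) (t : List Letter) :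
    nf (w ++ t) = nf w ++ nf t := by
  subst hw
  rw [nf, List.append_assoc, List.singleton_append, normAux_split]
  rfl

lemma replB_inj : ∀ (b b' i i' : ℕ) (X X' : List Letter),
    List.replicate b Letter.B ++ Letter.G i :: X
      = List.replicate b' Letter.B ++ Letter.G i' :: X' →
    b = b' ∧ i = i' ∧ X = X' := by
  intro b
  induction b with
  | zero =>
      intro b' i i' X X' h
      cases b' with
      | zero => simp_all
      | succ b' => rw [List.replicate_succ] at h; simp at h
  | succ b ih =>
      intro b' i i' X X' h
      cases b' with
      | zero => rw [List.replicate_succ] at h; simp at h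
      | succ b' =>
          rw [List.replicate_succ, List.replicate_succ] at h
          simp only [List.cons_append, List.cons.injEq] at h
          obtain ⟨h1, h2, h3⟩ := ih b' i i' X X' h.2
          exact ⟨by omega, h2, h3⟩

lemma replAB_inj : ∀ (a a' b b' i i' : ℕ) (X X' : List Letter),
    List.replicate a Letter.A ++ List.replicate b Letter.B ++ Letter.G i :: X
      = List.replicate a' Letter.A ++ List.replicate b' Letter.B ++ Letter.G i' :: X' →
    a = a' ∧ b = b' ∧ i = i' ∧ X = X' := by
  intro a
  induction a with
  | zero =>
      intro a' b b' i i' X X' h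
      cases a' with
      | zero =>
          simp only [List.replicate_zero, List.nil_append] at h
          obtain ⟨h1, h2, h3⟩ := replB_inj b b' i i' X X' h
          exact ⟨rfl, h1, h2, h3⟩
      | succ a' =>
          rw [List.replicate_succ (n := a')] at h
          simp only [List.replicate_zero, List.nil_append, List.cons_append,
            List.append_assoc] at h
          cases b with
          | zero => simp at h
          | succ b => rw [List.replicate_succ] at h; simp at h
  | succ a ih =>
      intro a' b b' i i' X X' h
      cases a' with
      | zero =>
          rw [List.replicate_succ] at h
          simp only [List.replicate_zero, List.nil_append, List.cons_append,
            List.append_assoc] at h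
          cases b' with
          | zero => simp at h
          | succ b' => rw [List.replicate_succ (n := b')] at h; simp at h
      | succ a' =>
          rw [List.replicate_succ, List.replicate_succ] at h
          simp only [List.cons_append, List.cons.injEq] at h
          obtain ⟨h1, h2, h3, h4⟩ := ih a' b b' i i' X X' (by
            simpa [List.append_assoc] using h.2)
          exact ⟨by omega, h2, h3, h4⟩

/-! ## The main combinatorial gap lemma -/

def Letter.isG : Letter → Bool
  | .G _ => true
  | _ => false

lemma isAB_of_not_isG {a : Letter} (h : a.isG = false) : a.isAB := by
  cases a <;> simp_all [Letter.isG, Letter.isAB]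

lemma main_gap (s : ℕ) (x w y : List Letter)
    (hlast : ∃ i, w.getLast? = some (Letter.G i))
    (h : nf (List.replicate s Letter.B ++ x) = nf (w ++ y)) :
    ∃ ξ, ξ ≠ [] ∧ PEqv w (List.replicate s Letter.B ++ ξ) := by
  classical
  obtain ⟨iw, hlw⟩ := hlast
  obtain ⟨w₀, hw₀⟩ := List.getLast?_eq_some_iff.1 hlw
  have hGmem : ∃ a ∈ w, a.isG = true := ⟨Letter.G iw, by simp [hw₀], rfl⟩
  set q := w.findIdx Letter.isG with hqdef
  have hq : q < w.length := List.findIdx_lt_length_of_exists hGmem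
  have hwq : (w[q]'hq).isG = true := List.findIdx_getElem
  obtain ⟨i₀, hwq0⟩ : ∃ i₀, w[q]'hq = Letter.G i₀ := by
    cases hx : w[q]'hq <;> simp_all [Letter.isG]
  have hmin : ∀ t (ht : t < q), (w[t]'(by omega)).isG = false :=
    fun t ht => List.not_of_lt_findIdx ht
  set u := w.take q with hudef
  set rest := w.drop (q+1) with hrestdef
  have hdecomp : w = u ++ Letter.G i₀ :: rest := by
    rw [hudef, hrestdef, ← hwq0, ← List.drop_eq_getElem_cons hq, List.take_append_drop]
  have hulen : u.length = q := by rw [hudef, List.length_take]; omega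
  have huAB : ∀ a ∈ u, a.isAB := by
    intro a ha
    obtain ⟨n, hn, hna⟩ := List.mem_iff_getElem.1 ha
    have hnq : n < q := by rwa [hulen] at hn
    have hwn : u[n]'hn = w[n]'(by omega) := List.getElem_take
    exact isAB_of_not_isG (by rw [← hna, hwn]; exact hmin n hnq)
  -- transfer the G at position q to the left-hand side
  have hRq : (w ++ y)[q]? = some (Letter.G i₀) := by
    rw [List.getElem?_append, if_pos hq, List.getElem?_eq_some_iff]
    exact ⟨hq, hwq0⟩
  have hLq : (List.replicate s Letter.B ++ x)[q]? = some (Letter.G i₀) :=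
    (nfEq_getG h q i₀).2 hRq
  have hsq : s ≤ q := by
    by_contra hc
    rw [List.getElem?_append,
      if_pos (by simpa using by omega : q < (List.replicate s Letter.B).length),
      List.getElem?_eq_some_iff] at hLq
    obtain ⟨h1, h2⟩ := hLq
    rw [List.getElem_replicate] at h2
    exact absurd h2 (by simp)
  have hxq : x[q - s]? = some (Letter.G i₀) := by
    rw [List.getElem?_append_right (by simpa using hsq)] at hLq
    simpa using hLq
  obtain ⟨hxqlt, hxqe⟩ := List.getElem?_eq_some_iff.1 hxq
  set tx := x.take (q - s) with htxdef
  have htxlen : tx.length = q - s := by rw [htxdef, List.length_take]; omega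
  have htxAB : ∀ a ∈ tx, a.isAB := by
    intro a ha
    obtain ⟨n, hn, hna⟩ := List.mem_iff_getElem.1 ha
    have hnq : n < q - s := by rwa [htxlen] at hn
    have hxn : tx[n]'hn = x[n]'(by omega) := List.getElem_take
    refine isAB_of_not_isG ?_
    by_contra hc
    obtain ⟨ig, hig⟩ : ∃ ig, x[n]'(by omega) = Letter.G ig := by
      have hgt : (x[n]'(by omega)).isG = true := by
        have hag : a.isG = true := by simpa using hc
        rwa [← hna, hxn] at hag
      cases hy : x[n]'(by omega) with
      | A => rw [hy] at hgt; simp [Letter.isG] at hgt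
      | B => rw [hy] at hgt; simp [Letter.isG] at hgt
      | G ig => exact ⟨ig, rfl⟩
    have hLn : (List.replicate s Letter.B ++ x)[s + n]? = some (Letter.G ig) := by
      rw [List.getElem?_append_right (by simp),
        show s + n - (List.replicate s Letter.B).length = n by simp]
      exact List.getElem?_eq_some_iff.2 ⟨by omega, hig⟩
    have hRn := (nfEq_getG h (s + n) ig).1 hLn
    rw [List.getElem?_append, if_pos (by omega : s + n < w.length),
      List.getElem?_eq_some_iff] at hRn
    obtain ⟨h1, h2⟩ := hRn
    have := hmin (s + n) (by omega)
    rw [h2] at this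
    simp [Letter.isG] at this
  have hxdecomp : x = tx ++ Letter.G i₀ :: x.drop (q - s + 1) := by
    rw [htxdef, ← hxqe, ← List.drop_eq_getElem_cons hxqlt, List.take_append_drop]
  -- compute both normal forms
  have hnfR : nf (w ++ y)
      = List.replicate (u.count Letter.A) Letter.A
        ++ List.replicate (u.count Letter.B) Letter.B
        ++ Letter.G i₀ :: nf (rest ++ y) := by
    conv_lhs => rw [hdecomp]
    rw [show (u ++ Letter.G i₀ :: rest) ++ y = u ++ (Letter.G i₀ :: (rest ++ y)) by simp]
    rw [nf, normAux_ABprefix u huAB]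
    simp [normAux, nf]
  have hnfL : nf (List.replicate s Letter.B ++ x)
      = List.replicate (tx.count Letter.A) Letter.A
        ++ List.replicate (s + tx.count Letter.B) Letter.B
        ++ Letter.G i₀ :: nf (x.drop (q - s + 1)) := by
    conv_lhs => rw [hxdecomp]
    rw [show List.replicate s Letter.B ++ (tx ++ Letter.G i₀ :: x.drop (q - s + 1))
      = (List.replicate s Letter.B ++ tx) ++ (Letter.G i₀ :: x.drop (q - s + 1)) by simp]
    rw [nf, normAux_ABprefix (List.replicate s Letter.B ++ tx)
      (by intro a ha; rcases List.mem_append.1 ha with ha | ha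
          · rw [List.eq_of_mem_replicate ha]; trivial
          · exact htxAB a ha)]
    simp [normAux, nf, List.count_append, List.count_replicate]
  obtain ⟨hAeq, hBeq, _, _⟩ := replAB_inj _ _ _ _ _ _ _ _ (hnfL ▸ hnfR ▸ h)
  -- now build the extension
  refine ⟨List.replicate (u.count Letter.A) Letter.A
    ++ List.replicate (u.count Letter.B - s) Letter.B ++ Letter.G i₀ :: rest,
    by simp, ?_⟩
  rw [peqv_iff_nf]
  have hbs : s ≤ u.count Letter.B := by omega
  conv_lhs => rw [hdecomp]
  rw [nf, normAux_ABprefix u huAB]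
  rw [show List.replicate s Letter.B
      ++ (List.replicate (u.count Letter.A) Letter.A
        ++ List.replicate (u.count Letter.B - s) Letter.B ++ Letter.G i₀ :: rest)
    = (List.replicate s Letter.B ++ List.replicate (u.count Letter.A) Letter.A
        ++ List.replicate (u.count Letter.B - s) Letter.B) ++ (Letter.G i₀ :: rest) by simp]
  rw [nf, normAux_ABprefix _
    (by intro a ha
        rcases List.mem_append.1 ha with ha | ha
        · rcases List.mem_append.1 ha with ha | ha <;>
            (rw [List.eq_of_mem_replicate ha]; trivial)
        · rw [List.eq_of_mem_replicate ha]; trivial)]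
  show normAux _ _ _ = normAux _ _ _
  congr 1
  rotate_left
  · simp [List.count_append, List.count_replicate]; omega
  congr 1
  · simp [List.count_append, List.count_replicate]

/-- Proposition 3.11 of the paper.  Let `j ≥ 1`, `ℓ ≥ 0`, `m = p_j + ℓ + 1`,
`j' ≥ j` and `ℓ' ≥ m`.  Suppose `(μ, ν) ∈ S_j` and `(μ', ν') ∈ S_{j'}`.  Let `δ = μ·α^r` and
`ε = ν·β^s` where `r = p_j + ℓ − |μ|` and `s = p_j + ℓ − |ν|`, and let
`(δ', ε') = (μ'·c^{r'}, ν'·d^{s'}) ∈ S_{j',ℓ'}` where `{c, d} = {α, β}`.  If `ε ⩓ δ'`, then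
either `μ' = ν` (as classes) or `μ'` is a nontrivial extension of `ε`. -/
theorem stmt4 (k : ℕ → ℕ) (hk0 : k 0 = 0)
    (hinf : {i : ℕ | 1 ≤ i ∧ k i ≠ 0}.Infinite)
    (p : ℕ → ℕ) (hp : Enumerates k p)
    (j ℓ j' ℓ' m : ℕ) (hj : 1 ≤ j) (hj' : j ≤ j') (hm : m = p j + ℓ + 1) (hℓ' : m ≤ ℓ')
    (μ ν μ' ν' : List Letter) (hS : InS k p j μ ν) (hS' : InS k p j' μ' ν')
    (r s : ℕ) (hr : r = p j + ℓ - μ.length) (hs : s = p j + ℓ - ν.length)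
    (δ ε : List Letter)
    (hδ : δ = μ ++ List.replicate r Letter.A) (hε : ε = ν ++ List.replicate s Letter.B)
    (c d : Letter) (hcd : (c = Letter.A ∧ d = Letter.B) ∨ (c = Letter.B ∧ d = Letter.A))
    (r' s' : ℕ) (δ' ε' : List Letter)
    (hδ' : δ' = μ' ++ List.replicate r' c) (hε' : ε' = ν' ++ List.replicate s' d)
    (hSJL : InSJL k p j' ℓ' δ' ε')
    (hmeet : Meets k 1 ε δ') :
    PEqv μ' ν ∨ PExtendsNontrivially μ' ε := by
  obtain ⟨hp0, hpmono, hp1, _⟩ := hp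
  obtain ⟨hμp, hνp, hμphi, hνphi, hlen⟩ := hS
  obtain ⟨hμ'p, hν'p, hμ'phi, hν'phi, hlen'⟩ := hS'
  obtain ⟨_μ, _ν, _η, _θ, _, _, _, _, _, hδ'len, _, _⟩ := hSJL
  obtain ⟨l, -, ⟨ξ, hξ⟩, ⟨ξ', hξ'⟩⟩ := hmeet
  have E : nf (ε ++ ξ) = nf (δ' ++ ξ') :=
    PEqv.nf_eq (Relation.EqvGen.trans _ _ _ (Relation.EqvGen.symm _ _ hξ) hξ')
  have hpj' : p j ≤ p j' := hpmono.monotone hj'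
  have hℓ'1 : 1 ≤ ℓ' := by omega
  have hνlen : ν.length ≤ p j := by
    rcases hνphi with h | h
    · rw [h]; simp
    · exact h.2.1
  have hνδ' : ν.length < δ'.length := by rw [hδ'len]; omega
  have hr'sum : δ'.length = μ'.length + r' := by rw [hδ']; simp
  rcases hνphi with hνnil | ⟨hν1, hνle2, i₁, hνlast⟩
  · -- ν is empty
    rcases hμ'phi with hμ'nil | ⟨hμ'1, hμ'le, i₂, hμ'last⟩
    · left; rw [hμ'nil, hνnil]; exact Relation.EqvGen.refl _
    · right
      rw [hε, hνnil, hδ'] at E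
      simp only [List.nil_append, List.append_assoc] at E
      obtain ⟨ξ₀, hξ₀ne, hξ₀⟩ :=
        main_gap s ξ μ' (List.replicate r' c ++ ξ') ⟨i₂, hμ'last⟩ E
      exact ⟨ξ₀, hξ₀ne, by rw [hε, hνnil]; simpa using hξ₀⟩
  · -- ν is nonempty, ends with G i₁
    have hνidx : ν[ν.length - 1]? = some (Letter.G i₁) := by
      rw [← List.getLast?_eq_getElem?]; exact hνlast
    have hLG : (ε ++ ξ)[ν.length - 1]? = some (Letter.G i₁) := by
      rw [hε, List.append_assoc, List.getElem?_append, if_pos (by omega)]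
      exact hνidx
    have hRG : (δ' ++ ξ')[ν.length - 1]? = some (Letter.G i₁) := (nfEq_getG E _ _).1 hLG
    rcases hμ'phi with hμ'nil | ⟨hμ'1, hμ'le, i₂, hμ'last⟩
    · exfalso
      have hμ'0 : μ'.length = 0 := by rw [hμ'nil]; simp
      rw [hδ', hμ'nil] at hRG
      simp only [List.nil_append] at hRG
      rw [List.getElem?_append, if_pos (by simp; omega : ν.length - 1 < (List.replicate r' c).length),
        List.getElem?_eq_some_iff] at hRG
      obtain ⟨hbd, h2⟩ := hRG
      rw [List.getElem_replicate] at h2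
      rcases hcd with ⟨hc, -⟩ | ⟨hc, -⟩ <;> rw [hc] at h2 <;> exact absurd h2 (by simp)
    · -- μ' nonempty, ends with G i₂
      obtain ⟨ν₀, hν₀⟩ := List.getLast?_eq_some_iff.1 hνlast
      obtain ⟨μ₀, hμ₀⟩ := List.getLast?_eq_some_iff.1 hμ'last
      rcases Nat.lt_or_ge ν.length μ'.length with hlt | hge
      · -- ν is a proper "prefix": nontrivial extension of ε
        right
        set T := μ'.take ν.length with hTdef
        set W := μ'.drop ν.length with hWdef
        have hTW : μ' = T ++ W := (List.take_append_drop _ _).symm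
        have hTlen : T.length = ν.length := by rw [hTdef, List.length_take]; omega
        have hμ'G : μ'[ν.length - 1]? = some (Letter.G i₁) := by
          rw [hδ', List.append_assoc, List.getElem?_append, if_pos (by omega)] at hRG
          exact hRG
        have hTG : T.getLast? = some (Letter.G i₁) := by
          rw [List.getLast?_eq_getElem?, hTlen, hTdef, List.getElem?_take,
            if_pos (by omega)]
          exact hμ'G
        obtain ⟨T₀, hT₀⟩ := List.getLast?_eq_some_iff.1 hTG
        have hWlast : W.getLast? = some (Letter.G i₂) := by
          have hμ₀len : ν.length ≤ μ₀.length := by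
            have : μ'.length = μ₀.length + 1 := by rw [hμ₀]; simp
            omega
          rw [hWdef, hμ₀, List.drop_append,
            show ν.length - μ₀.length = 0 by omega, List.drop_zero]
          exact List.getLast?_concat
        have E1 : nf ν ++ nf (List.replicate s Letter.B ++ ξ)
            = nf T ++ nf (W ++ (List.replicate r' c ++ ξ')) := by
          rw [← nf_split_at_G hν₀, ← nf_split_at_G hT₀, ← List.append_assoc, ← hε,
            ← List.append_assoc, ← List.append_assoc, ← hTW, ← hδ']
          exact E
        obtain ⟨e1, e2⟩ := List.append_inj E1 (by rw [nf_length, nf_length, hTlen])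
        obtain ⟨ξ₀, hξ₀ne, hξ₀⟩ :=
          main_gap s ξ W (List.replicate r' c ++ ξ') ⟨i₂, hWlast⟩ e2
        refine ⟨ξ₀, hξ₀ne, ?_⟩
        have c1 : PEqv μ' (T ++ (List.replicate s Letter.B ++ ξ₀)) := by
          rw [hTW]; exact hξ₀.append_left T
        have c2 : PEqv T ν := peqv_iff_nf.2 e1.symm
        have c3 : PEqv (T ++ (List.replicate s Letter.B ++ ξ₀))
            (ν ++ (List.replicate s Letter.B ++ ξ₀)) := c2.append_right _
        have := Relation.EqvGen.trans _ _ _ c1 c3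
        rw [hε, List.append_assoc]
        exact this
      · -- equal lengths: μ' ≈ ν
        left
        have hν1' : ν.length - 1 < μ'.length := by
          by_contra hc
          push_neg at hc
          rw [hδ', List.append_assoc, List.getElem?_append, if_neg (by omega)] at hRG
          rw [List.getElem?_append,
            if_pos (by simp; omega : ν.length - 1 - μ'.length < (List.replicate r' c).length),
            List.getElem?_eq_some_iff] at hRG
          obtain ⟨hbd, h2⟩ := hRG
          rw [List.getElem_replicate] at h2
          rcases hcd with ⟨hc', -⟩ | ⟨hc', -⟩ <;> rw [hc'] at h2 <;> exact absurd h2 (by simp)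
        have heq : μ'.length = ν.length := by omega
        have E1 : nf ν ++ nf (List.replicate s Letter.B ++ ξ)
            = nf μ' ++ nf (List.replicate r' c ++ ξ') := by
          rw [← nf_split_at_G hν₀, ← nf_split_at_G hμ₀, ← List.append_assoc, ← hε,
            ← List.append_assoc, ← hδ']
          exact E
        have := (List.append_inj E1 (by rw [nf_length, nf_length, heq])).1
        exact peqv_iff_nf.2 this.symm
end

section
/- Let j ≥ 1 and ℓ ≥ 1, and let (δ, ε) ∈ S_{j,ℓ}. Then δ and ε have no nontrivial common suffix: there do not exist classes δ₀, ε₀ and a nonempty class ξ with δ = δ₀·ξ and ε = ε₀·ξ. -/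
def isABb : Letter → Bool
  | .A => true
  | .B => true
  | .G _ => false

def abTail (w : List Letter) : List Letter := w.reverse.takeWhile isABb

lemma takeWhile_append_all {p : Letter → Bool} {l₁ : List Letter} (l₂ : List Letter)
    (h : ∀ x ∈ l₁, p x) : (l₁ ++ l₂).takeWhile p = l₁ ++ l₂.takeWhile p := by
  induction l₁ with
  | nil => simp
  | cons a t ih =>
    simp [List.takeWhile_cons, h a (by simp), ih fun x hx => h x (by simp [hx])]

lemma takeWhile_append_not_all {p : Letter → Bool} {l₁ : List Letter} (l₂ : List Letter)
    (h : ¬ ∀ x ∈ l₁, p x) : (l₁ ++ l₂).takeWhile p = l₁.takeWhile p := by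
  induction l₁ with
  | nil => simp at h
  | cons a t ih =>
    by_cases ha : p a
    · simp only [List.cons_append, List.takeWhile_cons, ha]
      rw [ih]
      intro hall
      exact h fun x hx => (List.mem_cons.1 hx).elim (fun e => e ▸ ha) (hall x)
    · simp [List.takeWhile_cons, ha]

lemma swap_perm {w₁ w₂ : List Letter} (h : Swap w₁ w₂) : w₁.Perm w₂ := by
  obtain ⟨u, v, a, b, _, _, rfl, rfl⟩ := h
  exact (List.Perm.append_left u (List.Perm.swap b a v))

lemma peqv_perm {w₁ w₂ : List Letter} (h : PEqv w₁ w₂) : w₁.Perm w₂ := by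
  induction h with
  | rel _ _ h => exact swap_perm h
  | refl => exact List.Perm.refl _
  | symm _ _ _ ih => exact ih.symm
  | trans _ _ _ _ _ ih₁ ih₂ => exact ih₁.trans ih₂

lemma isABb_of_isAB {a : Letter} (h : a.isAB) : isABb a = true := by
  cases a <;> simp [isABb] at h ⊢ <;> exact h

lemma swap_abTail_perm {w₁ w₂ : List Letter} (h : Swap w₁ w₂) :
    (abTail w₁).Perm (abTail w₂) := by
  obtain ⟨u, v, a, b, ha, hb, rfl, rfl⟩ := h
  have ha' := isABb_of_isAB ha
  have hb' := isABb_of_isAB hb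
  unfold abTail
  simp only [List.reverse_append, List.reverse_cons, List.append_assoc, List.cons_append,
    List.nil_append]
  by_cases hv : ∀ x ∈ v.reverse, isABb x
  · rw [takeWhile_append_all _ hv, takeWhile_append_all _ hv]
    simp only [List.takeWhile_cons, ha', hb', if_true]
    exact List.Perm.append_left _ (List.Perm.swap a b _)
  · rw [takeWhile_append_not_all _ hv, takeWhile_append_not_all _ hv]

lemma peqv_abTail_perm {w₁ w₂ : List Letter} (h : PEqv w₁ w₂) :
    (abTail w₁).Perm (abTail w₂) := by
  induction h with
  | rel _ _ h => exact swap_abTail_perm h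
  | refl => exact List.Perm.refl _
  | symm _ _ _ ih => exact ih.symm
  | trans _ _ _ _ _ ih₁ ih₂ => exact ih₁.trans ih₂

lemma abTail_append_eq {μ η : List Letter} (hη : IsLambda1 η)
    (hμ : InPhi n μ) : abTail (μ ++ η) = η.reverse := by
  unfold abTail
  rw [List.reverse_append,
    takeWhile_append_all _ fun x hx => isABb_of_isAB (hη x (List.mem_reverse.1 hx))]
  rcases hμ with rfl | ⟨_, _, i, hi⟩
  · simp
  · have : μ.reverse.head? = some (Letter.G i) := by rw [List.head?_reverse]; exact hi
    cases hr : μ.reverse with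
    | nil => simp
    | cons a t =>
      rw [hr] at this
      simp only [List.head?_cons, Option.some.injEq] at this
      subst this
      simp [List.takeWhile_cons, isABb]

lemma mem_of_tail {η : List Letter} {a : Letter} {δ₀ ξ : List Letter} {t : List Letter}
    (hperm : (abTail (δ₀ ++ ξ)).Perm η.reverse) (hrev : ξ.reverse = a :: t)
    (ha : isABb a = true) : a ∈ η := by
  have : abTail (δ₀ ++ ξ) = a :: ((t ++ δ₀.reverse).takeWhile isABb) := by
    unfold abTail
    rw [List.reverse_append, hrev]
    simp [List.takeWhile_cons, ha]
  have hmem : a ∈ abTail (δ₀ ++ ξ) := by rw [this]; exact List.mem_cons_self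
  exact List.mem_reverse.1 (hperm.mem_iff.1 hmem)

/-- Remark 3.6(3) of the paper.  Let `j ≥ 1`, `ℓ ≥ 1` and `(δ, ε) ∈ S_{j,ℓ}`.
Then `δ` and `ε` have no nontrivial common suffix: there are no classes `δ₀, ε₀` and nonempty
class `ξ` with `δ = δ₀·ξ` and `ε = ε₀·ξ`. -/
theorem stmt5 (k : ℕ → ℕ) (hk0 : k 0 = 0)
    (hinf : {i : ℕ | 1 ≤ i ∧ k i ≠ 0}.Infinite)
    (p : ℕ → ℕ) (hp : Enumerates k p)
    (j ℓ : ℕ) (hj : 1 ≤ j) (hℓ : 1 ≤ ℓ)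
    (δ ε : List Letter) (hSJL : InSJL k p j ℓ δ ε) :
    ¬ ∃ δ₀ ε₀ ξ : List Letter, ξ ≠ [] ∧ PEqv δ (δ₀ ++ ξ) ∧ PEqv ε (ε₀ ++ ξ) := by
  obtain ⟨μ, ν, η, θ, hS, hη, hθ, hδ, hε, hlδ, hlε, hperp⟩ := hSJL
  rintro ⟨δ₀, ε₀, ξ, hξ, h1, h2⟩
  -- η is nonempty
  have hμlen : μ.length ≤ p j := by
    rcases hS.2.2.1 with rfl | ⟨_, h, _⟩
    · exact Nat.zero_le _
    · exact h
  have hlen : μ.length + η.length = p j + ℓ := by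
    have := (peqv_perm hδ).length_eq
    rw [hlδ] at this
    simpa [List.length_append] using this.symm
  have hηne : η ≠ [] := by
    intro h
    rw [h] at hlen
    simp at hlen
    omega
  -- tails
  have tδ : (abTail (δ₀ ++ ξ)).Perm η.reverse := by
    have := peqv_abTail_perm (Relation.EqvGen.trans _ _ _
      (Relation.EqvGen.symm _ _ h1) hδ)
    rwa [abTail_append_eq hη hS.2.2.1] at this
  have tε : (abTail (ε₀ ++ ξ)).Perm θ.reverse := by
    have := peqv_abTail_perm (Relation.EqvGen.trans _ _ _
      (Relation.EqvGen.symm _ _ h2) hε)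
    rwa [abTail_append_eq hθ hS.2.2.2.1] at this
  -- last letter of ξ
  cases hrev : ξ.reverse with
  | nil => exact hξ (by simpa using congrArg List.reverse hrev)
  | cons a t =>
    cases a with
    | G i =>
      have : abTail (δ₀ ++ ξ) = [] := by
        unfold abTail
        rw [List.reverse_append, hrev]
        simp [List.takeWhile_cons, isABb]
      rw [this] at tδ
      have := tδ.length_eq
      simp at this
      exact hηne (List.eq_nil_of_length_eq_zero (by simpa using this.symm))
    | A =>
      have hA1 : Letter.A ∈ η := mem_of_tail tδ hrev rfl
      have hA2 : Letter.A ∈ θ := mem_of_tail tε hrev rfl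
      have c1 : 0 < η.count Letter.A := List.count_pos_iff.2 hA1
      have c2 : 0 < θ.count Letter.A := List.count_pos_iff.2 hA2
      unfold DegPerp at hperp
      have : η.count Letter.A * θ.count Letter.A ≠ 0 := Nat.mul_ne_zero c1.ne' c2.ne'
      omega
    | B =>
      have hB1 : Letter.B ∈ η := mem_of_tail tδ hrev rfl
      have hB2 : Letter.B ∈ θ := mem_of_tail tε hrev rfl
      have c1 : 0 < η.count Letter.B := List.count_pos_iff.2 hB1
      have c2 : 0 < θ.count Letter.B := List.count_pos_iff.2 hB2
      unfold DegPerp at hperp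
      have : η.count Letter.B * θ.count Letter.B ≠ 0 := Nat.mul_ne_zero c1.ne' c2.ne'
      omega
end

section
/- The closure in L²(X, μ) of span{1_F : F ∈ Q_n for some n ≥ 0} equals the closure of the sum ℂ·1_X + Σ_{n ≥ 0} Σ_{E ∈ Q_n} K(E), and this sum is orthogonal: ℂ·1_X is orthogonal to every K(E), and K(E) is orthogonal to K(E') whenever E ∈ Q_n, E' ∈ Q_t and (n, E) ≠ (t, E'). -/
open MeasureTheory Submodule
open scoped ComplexInnerProductSpace Classical

/-- The indicator function `1_s` of a set `s`, regarded as an element of `L²(X, μ)`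
(and `0` if `s` is not measurable, a case we never use). -/
noncomputable def ind {X : Type*} [MeasurableSpace X] (μ : Measure X) [IsFiniteMeasure μ]
    (s : Set X) : Lp ℂ 2 μ :=
  if h : MeasurableSet s then indicatorConstLp 2 h (measure_ne_top μ s) (1 : ℂ) else 0

/-- `Q` is a sequence of finite measurable partitions of `X`, with `Q 0 = {X}` and with
`Q (n+1)` refining `Q n`. -/
def IsPartitionSeq {X : Type*} [MeasurableSpace X] (Q : ℕ → Finset (Set X)) : Prop :=
  Q 0 = {Set.univ} ∧
  (∀ n, ∀ s ∈ Q n, MeasurableSet s) ∧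
  (∀ n, ∀ s ∈ Q n, ∀ t ∈ Q n, s ≠ t → s ∩ t = ∅) ∧
  (∀ n, ⋃ s ∈ Q n, s = Set.univ) ∧
  (∀ n, ∀ s ∈ Q (n + 1), ∃ t ∈ Q n, s ⊆ t)

/-- For `E ∈ Q n`, the subspace
`K(E) = span{1_F : F ∈ Q_{n+1}, F ⊆ E} ∩ {1_E}^⊥` of `L²(X, μ)`. -/
noncomputable def Ksp {X : Type*} [MeasurableSpace X] (μ : Measure X) [IsFiniteMeasure μ]
    (Q : ℕ → Finset (Set X)) (n : ℕ) (E : Set X) : Submodule ℂ (Lp ℂ 2 μ) :=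
  (span ℂ {f | ∃ F ∈ Q (n + 1), F ⊆ E ∧ f = ind μ F}) ⊓ (ℂ ∙ ind μ E)ᗮ

section helpers
variable {X : Type*} [MeasurableSpace X] {μ : Measure X} [IsFiniteMeasure μ]

lemma ind_def {s : Set X} (hs : MeasurableSet s) :
    ind μ s = indicatorConstLp 2 hs (measure_ne_top μ s) (1 : ℂ) := dif_pos hs

lemma inner_ind {s t : Set X} (hs : MeasurableSet s) (ht : MeasurableSet t) :
    ⟪ind μ s, ind μ t⟫ = ((μ (t ∩ s)).toReal : ℂ) := by
  rw [ind_def hs, ind_def ht, L2.inner_indicatorConstLp_one hs (measure_ne_top μ s),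
    setIntegral_indicatorConstLp hs ht (measure_ne_top μ t) (1 : ℂ)]
  simp [Complex.real_smul, measureReal_def]

lemma ind_null {s : Set X} (h : μ s = 0) : ind μ s = 0 := by
  by_cases hs : MeasurableSet s
  · rw [ind_def hs, ← norm_eq_zero, norm_indicatorConstLp (by norm_num) (by norm_num)]
    simp [h, measureReal_def]
  · rw [ind, dif_neg hs]

lemma ind_union {s t : Set X} (hs : MeasurableSet s) (ht : MeasurableSet t)
    (hst : Disjoint s t) : ind μ (s ∪ t) = ind μ s + ind μ t := by
  rw [ind_def (hs.union ht), ind_def hs, ind_def ht,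
    ← indicatorConstLp_disjoint_union hs ht (measure_ne_top μ s) (measure_ne_top μ t) hst]

lemma inner_span_right {v : Lp ℂ 2 μ} {s : Set (Lp ℂ 2 μ)} (h : ∀ g ∈ s, ⟪v, g⟫ = 0) :
    ∀ w ∈ span ℂ s, ⟪v, w⟫ = 0 := fun w hw =>
  Submodule.mem_orthogonal_singleton_iff_inner_right.1
    (span_le.2 (fun g hg => Submodule.mem_orthogonal_singleton_iff_inner_right.2 (h g hg)) hw)

lemma inner_span_left {v : Lp ℂ 2 μ} {s : Set (Lp ℂ 2 μ)} (h : ∀ g ∈ s, ⟪g, v⟫ = 0) :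
    ∀ w ∈ span ℂ s, ⟪w, v⟫ = 0 := fun w hw =>
  Submodule.mem_orthogonal_singleton_iff_inner_left.1
    (span_le.2 (fun g hg => Submodule.mem_orthogonal_singleton_iff_inner_left.2 (h g hg)) hw)

/-- Key: if every generator of `s` is `ind μ F` with `F ⊆ E` measurable, and `A ∩ E = B ∩ E`,
then `⟪ind μ A, ·⟫` agrees with `⟪ind μ B, ·⟫` on `span ℂ s`. -/
lemma inner_ind_congr {E A B : Set X} (hA : MeasurableSet A) (hB : MeasurableSet B)
    (hAB : A ∩ E = B ∩ E) {s : Set (Lp ℂ 2 μ)}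
    (hs : ∀ g ∈ s, ∃ F : Set X, MeasurableSet F ∧ F ⊆ E ∧ g = ind μ F) :
    ∀ y ∈ span ℂ s, ⟪ind μ A, y⟫ = ⟪ind μ B, y⟫ := by
  intro y hy
  have h0 : ⟪ind μ A - ind μ B, y⟫ = 0 := by
    refine inner_span_right (fun g hg => ?_) y hy
    obtain ⟨F, hFm, hFE, rfl⟩ := hs g hg
    rw [inner_sub_left, inner_ind hA hFm, inner_ind hB hFm]
    have : F ∩ A = F ∩ B := by
      rw [← Set.inter_eq_self_of_subset_left hFE]
      rw [Set.inter_assoc, Set.inter_assoc, Set.inter_comm E A, Set.inter_comm E B, hAB]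
    rw [this, sub_self]
  have h1 := inner_sub_left (𝕜 := ℂ) (ind μ A) (ind μ B) y
  rw [h0] at h1
  exact sub_eq_zero.1 h1.symm

lemma ind_biUnion (C : Finset (Set X)) (hm : ∀ c ∈ C, MeasurableSet c)
    (hd : ∀ c ∈ C, ∀ d ∈ C, c ≠ d → c ∩ d = ∅) :
    ind μ (⋃ c ∈ C, c) = ∑ c ∈ C, ind μ c := by
  classical
  induction C using Finset.induction_on with
  | empty => simp [ind_null]
  | @insert a C ha ih =>
    have hmU : MeasurableSet (⋃ c ∈ C, c) :=
      MeasurableSet.biUnion C.countable_toSet (fun c hc => hm c (Finset.mem_insert_of_mem hc))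
    have hdisj : Disjoint a (⋃ c ∈ C, c) := by
      refine Set.disjoint_left.2 fun x hxa hxU => ?_
      simp only [Set.mem_iUnion] at hxU
      obtain ⟨d, hdC, hxd⟩ := hxU
      have hne : a ≠ d := fun h => ha (h ▸ hdC)
      have := hd a (Finset.mem_insert_self a C) d (Finset.mem_insert_of_mem hdC) hne
      exact (Set.eq_empty_iff_forall_notMem.1 this x) ⟨hxa, hxd⟩
    rw [Finset.set_biUnion_insert, ind_union (hm a (Finset.mem_insert_self a C)) hmU hdisj,
      Finset.sum_insert ha, ih (fun c hc => hm c (Finset.mem_insert_of_mem hc))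
        (fun c hc d hdC hne => hd c (Finset.mem_insert_of_mem hc) d (Finset.mem_insert_of_mem hdC) hne)]

end helpers

section part
variable {X : Type*} [MeasurableSpace X] {μ : Measure X} [IsFiniteMeasure μ]
  {Q : ℕ → Finset (Set X)}

lemma refine_le (hQ : IsPartitionSeq Q) (m : ℕ) :
    ∀ d, ∀ s ∈ Q (m + d), ∃ u ∈ Q m, s ⊆ u := by
  intro d
  induction d with
  | zero => exact fun s hs => ⟨s, hs, subset_rfl⟩
  | succ d ih =>
    intro s hs
    obtain ⟨t, ht, hst⟩ := hQ.2.2.2.2 (m + d) s hs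
    obtain ⟨u, hu, htu⟩ := ih t ht
    exact ⟨u, hu, hst.trans htu⟩

lemma children_union (hQ : IsPartitionSeq Q) {n : ℕ} {E : Set X} (hE : E ∈ Q n) :
    ⋃ c ∈ (Q (n + 1)).filter (fun F => F ⊆ E), c = E := by
  apply Set.Subset.antisymm
  · exact Set.iUnion₂_subset fun c hc => (Finset.mem_filter.1 hc).2
  · intro x hx
    have hx' : x ∈ ⋃ s ∈ Q (n + 1), s := by rw [hQ.2.2.2.1 (n + 1)]; trivial
    simp only [Set.mem_iUnion] at hx'
    obtain ⟨F, hF, hxF⟩ := hx'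
    obtain ⟨t, ht, hFt⟩ := hQ.2.2.2.2 n F hF
    have htE : t = E := by
      by_contra hne
      exact (Set.eq_empty_iff_forall_notMem.1 (hQ.2.2.1 n t ht E hE hne) x) ⟨hFt hxF, hx⟩
    simp only [Set.mem_iUnion]
    exact ⟨F, Finset.mem_filter.2 ⟨hF, htE ▸ hFt⟩, hxF⟩
end part
section part2
variable {X : Type*} [MeasurableSpace X] {μ : Measure X} [IsFiniteMeasure μ]
  {Q : ℕ → Finset (Set X)}

lemma ind_eq_sum_children (hQ : IsPartitionSeq Q) {n : ℕ} {E : Set X} (hE : E ∈ Q n) :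
    ind μ E = ∑ c ∈ (Q (n + 1)).filter (fun F => F ⊆ E), ind μ c := by
  conv_lhs => rw [← children_union hQ hE]
  exact ind_biUnion (μ := μ) ((Q (n + 1)).filter (fun F => F ⊆ E))
    (fun c hc => hQ.2.1 (n + 1) c (Finset.mem_filter.1 hc).1)
    (fun c hc d hd hne => hQ.2.2.1 (n + 1) c (Finset.mem_filter.1 hc).1 d
      (Finset.mem_filter.1 hd).1 hne)

lemma inner_ind_Ksp (hQ : IsPartitionSeq Q) {t : ℕ} {E' : Set X} (hE' : E' ∈ Q t)
    {A : Set X} (hA : MeasurableSet A) (hAE : A ∩ E' = E' ∨ A ∩ E' = ∅) :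
    ∀ y ∈ Ksp μ Q t E', ⟪ind μ A, y⟫ = 0 := by
  intro y hy
  simp only [Ksp, Submodule.mem_inf] at hy
  have hgen : ∀ g ∈ {f | ∃ F ∈ Q (t + 1), F ⊆ E' ∧ f = ind μ F},
      ∃ F : Set X, MeasurableSet F ∧ F ⊆ E' ∧ g = ind μ F := by
    rintro g ⟨F, hF, hFE, hg⟩
    exact ⟨F, hQ.2.1 (t + 1) F hF, hFE, hg⟩
  cases hAE with
  | inl h =>
    rw [inner_ind_congr hA (hQ.2.1 t E' hE') (by rw [h, Set.inter_self]) hgen y hy.1]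
    exact hy.2 (ind μ E') (Submodule.mem_span_singleton_self _)
  | inr h =>
    rw [inner_ind_congr hA MeasurableSet.empty (by rw [h, Set.empty_inter]) hgen y hy.1,
      ind_null measure_empty, inner_zero_left]

lemma ksp_ortho_lt (hQ : IsPartitionSeq Q) {n t : ℕ} (h : n < t) {E E' : Set X}
    (hE' : E' ∈ Q t) : ∀ x ∈ Ksp μ Q n E, ∀ y ∈ Ksp μ Q t E', ⟪x, y⟫ = 0 := by
  intro x hx y hy
  simp only [Ksp, Submodule.mem_inf] at hx
  obtain ⟨G, hG, hE'G⟩ := refine_le hQ (n + 1) (t - (n + 1)) E'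
    (by rwa [Nat.add_sub_cancel' h])
  refine inner_span_left (fun g hg => ?_) x hx.1
  obtain ⟨F, hF, hFE, rfl⟩ := hg
  by_cases hFG : F = G
  · exact inner_ind_Ksp hQ hE' (hQ.2.1 (n + 1) F hF)
      (Or.inl (by rw [hFG]; exact Set.inter_eq_right.2 hE'G)) y hy
  · refine inner_ind_Ksp hQ hE' (hQ.2.1 (n + 1) F hF) (Or.inr ?_) y hy
    have hdisj := hQ.2.2.1 (n + 1) F hF G hG hFG
    exact Set.subset_empty_iff.1 (hdisj ▸ Set.inter_subset_inter_right F hE'G)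

lemma ksp_ortho_same (hQ : IsPartitionSeq Q) {n : ℕ} {E E' : Set X}
    (hE : E ∈ Q n) (hE' : E' ∈ Q n) (hne : E ≠ E') :
    ∀ x ∈ Ksp μ Q n E, ∀ y ∈ Ksp μ Q n E', ⟪x, y⟫ = 0 := by
  intro x hx y hy
  simp only [Ksp, Submodule.mem_inf] at hx
  refine inner_span_left (fun g hg => ?_) x hx.1
  obtain ⟨F, hF, hFE, rfl⟩ := hg
  refine inner_ind_Ksp hQ hE' (hQ.2.1 (n + 1) F hF) (Or.inr ?_) y hy
  have hdisj := hQ.2.2.1 n E hE E' hE' hne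
  exact Set.subset_empty_iff.1 (hdisj ▸ Set.inter_subset_inter_left E' hFE)

lemma ind_mem_sup (hQ : IsPartitionSeq Q) :
    ∀ n, ∀ F ∈ Q n, ind μ F ∈ (ℂ ∙ ind μ (Set.univ : Set X)) ⊔
      ⨆ n, ⨆ E ∈ Q n, Ksp μ Q n E := by
  intro n
  induction n with
  | zero =>
    intro F hF
    rw [hQ.1, Finset.mem_singleton] at hF
    subst hF
    exact Submodule.mem_sup_left (Submodule.mem_span_singleton_self _)
  | succ n ih =>
    intro F hF
    obtain ⟨E, hE, hFE⟩ := hQ.2.2.2.2 n F hF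
    by_cases hμE : μ E = 0
    · rw [ind_null (measure_mono_null hFE hμE)]; exact zero_mem _
    · set c : ℂ := (((μ F).toReal / (μ E).toReal : ℝ) : ℂ) with hc
      have hindF : ind μ F ∈ span ℂ {f | ∃ F' ∈ Q (n + 1), F' ⊆ E ∧ f = ind μ F'} :=
        subset_span ⟨F, hF, hFE, rfl⟩
      have hindE : ind μ E ∈ span ℂ {f | ∃ F' ∈ Q (n + 1), F' ⊆ E ∧ f = ind μ F'} := by
        rw [ind_eq_sum_children hQ hE]
        exact Submodule.sum_mem _ (fun d hd =>
          subset_span ⟨d, (Finset.mem_filter.1 hd).1, (Finset.mem_filter.1 hd).2, rfl⟩)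
      have hw : ind μ F - c • ind μ E ∈ Ksp μ Q n E := by
        simp only [Ksp, Submodule.mem_inf]
        refine ⟨sub_mem hindF (Submodule.smul_mem _ c hindE), ?_⟩
        rw [Submodule.mem_orthogonal_singleton_iff_inner_right, inner_sub_right,
          inner_smul_right, inner_ind (hQ.2.1 n E hE) (hQ.2.1 (n + 1) F hF),
          inner_ind (hQ.2.1 n E hE) (hQ.2.1 n E hE),
          Set.inter_eq_self_of_subset_left hFE, Set.inter_self, hc]
        have hb : ((μ E).toReal : ℂ) ≠ 0 :=
          Complex.ofReal_ne_zero.2 (ENNReal.toReal_ne_zero.2 ⟨hμE, measure_ne_top μ E⟩)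
        rw [Complex.ofReal_div, div_mul_cancel₀ _ hb, sub_self]
      have hKle : Ksp μ Q n E ≤ (ℂ ∙ ind μ (Set.univ : Set X)) ⊔
          ⨆ n, ⨆ E ∈ Q n, Ksp μ Q n E := by
        refine le_trans (le_trans (le_iSup₂ (f := fun E (_ : E ∈ Q n) => Ksp μ Q n E) E hE)
          (le_iSup (fun n => ⨆ E ∈ Q n, Ksp μ Q n E) n)) le_sup_right
      have hrw : ind μ F = c • ind μ E + (ind μ F - c • ind μ E) := (add_sub_cancel _ _).symm
      rw [hrw]
      exact add_mem (Submodule.smul_mem _ c (ih E hE)) (hKle hw)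

end part2


/-- The closure of `span{1_F : F ∈ Q n for some n}` in `L²(X, μ)` equals the
closure of `ℂ·1_X + Σ_{n ≥ 0} Σ_{E ∈ Q n} K(E)`, and this sum is orthogonal: `ℂ·1_X ⟂ K(E)` for
every `E`, and `K(E) ⟂ K(E')` whenever `E ∈ Q n`, `E' ∈ Q t` and `(n, E) ≠ (t, E')`. -/
theorem stmt11 {X : Type*} [MeasurableSpace X] (μ : Measure X) [IsFiniteMeasure μ]
    (Q : ℕ → Finset (Set X)) (hQ : IsPartitionSeq Q) :
    (span ℂ {f | ∃ n : ℕ, ∃ F ∈ Q n, f = ind μ F}).topologicalClosure =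
      ((ℂ ∙ ind μ Set.univ) ⊔ ⨆ n : ℕ, ⨆ E ∈ Q n, Ksp μ Q n E).topologicalClosure ∧
    (∀ n : ℕ, ∀ E ∈ Q n, ∀ w ∈ Ksp μ Q n E, ⟪ind μ Set.univ, w⟫ = 0) ∧
    (∀ n t : ℕ, ∀ E ∈ Q n, ∀ E' ∈ Q t, (n, E) ≠ (t, E') →
      ∀ x ∈ Ksp μ Q n E, ∀ y ∈ Ksp μ Q t E', ⟪x, y⟫ = 0) := by
  refine ⟨?_, ?_, ?_⟩
  · congr 1
    apply le_antisymm
    · rw [span_le]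
      rintro f ⟨n, F, hF, rfl⟩
      exact ind_mem_sup hQ n F hF
    · apply sup_le
      · rw [Submodule.span_singleton_le_iff_mem]
        exact subset_span ⟨0, Set.univ, by rw [hQ.1]; exact Finset.mem_singleton_self _, rfl⟩
      · refine iSup_le fun n => iSup_le fun E => iSup_le fun hE => ?_
        refine le_trans inf_le_left (span_mono ?_)
        rintro f ⟨F, hF, hFE, hfd⟩
        exact ⟨n + 1, F, hF, hfd⟩
  · intro n E hE w hw
    exact inner_ind_Ksp hQ hE MeasurableSet.univ (Or.inl (Set.univ_inter E)) w hw
  · intro n t E hE E' hE' hne x hx y hy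
    rcases lt_trichotomy n t with h | h | h
    · exact ksp_ortho_lt hQ h hE' x hx y hy
    · subst h
      have hEE' : E ≠ E' := fun h => hne (by rw [h])
      exact ksp_ortho_same hQ hE hE' hEE' x hx y hy
    · rw [← inner_conj_symm, ksp_ortho_lt hQ h hE y hy x hx, map_zero]
end
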